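/- arXiv:2101.05449 — 13 statements merged into one kernel-verified Lean document; each statement's English description precedes it below -/
import Mathlib

section
/- If R is a nontrivial ring in which every non central-unit is a sum of two nilpotents, then every central element of R that is not a unit is nilpotent. -/
/-- A ring has the 2-nil-sum property if every element that is not a central unit
is a sum of two nilpotents. -/
def TwoNilSum (R : Type*) [Ring R] : Prop :=
  ∀ a : R, ¬ (a ∈ Set.center R ∧ IsUnit a) →
    ∃ b c : R, IsNilpotent b ∧ IsNilpotent c ∧ a = b + c

theorem stmt_0 (R : Type*) [Ring R] [Nontrivial R] (h : TwoNilSum R) :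
    ∀ a : R, a ∈ Set.center R → ¬ IsUnit a → IsNilpotent a := by
  intro a ha hu
  obtain ⟨b, c, hb, hc, habc⟩ := h a (fun ⟨_, hu'⟩ => hu hu')
  have hab : Commute a b := (Set.mem_center_iff.mp ha).1 b
  have hbc : Commute b c := by
    have : c = a - b := by rw [habc]; abel
    rw [this]
    exact (hab.symm).sub_right (Commute.refl b)
  rw [habc]
  exact hbc.isNilpotent_add hb hc
end

section
/- If R is a nontrivial ring with the 2-nil-sum property, then the center C(R) of R is a local ring whose Jacobson radical is nil. -/
lemma key {R : Type*} [Ring R] (h : TwoNilSum R) (x : Subring.center R)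
    (hx : ¬ IsUnit x) : IsNilpotent x := by
  have hxc : (x : R) ∈ Set.center R := x.2
  have hnu : ¬ ((x : R) ∈ Set.center R ∧ IsUnit (x : R)) := by
    rintro ⟨-, hu⟩
    apply hx
    obtain ⟨u, hu⟩ := hu
    have hinv : (↑u⁻¹ : R) ∈ Set.center R := by
      rw [Set.mem_center_iff] at hxc ⊢
      constructor
      · intro a
        have hcm : (↑u : R) * a = a * ↑u := by rw [hu]; exact hxc.1 a
        have := congrArg (fun z => (↑u⁻¹ : R) * z * ↑u⁻¹) hcm
        simpa [mul_assoc] using (show Commute (↑u : R) a from hcm)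
      all_goals intros; noncomm_ring
    refine ⟨⟨x, ⟨(↑u⁻¹ : R), hinv⟩, ?_, ?_⟩, rfl⟩
    · exact Subtype.ext (by simp [hu])
    · exact Subtype.ext (by simp [hu])
  obtain ⟨b, c, hb, hc, hbc⟩ := h (x : R) hnu
  have hcomm : Commute b c := by
    have hxb : b * (x : R) = (x : R) * b := ((Set.mem_center_iff.mp hxc).1 b).symm
    have : c = (x : R) - b := by rw [hbc, add_sub_cancel_left]
    unfold Commute SemiconjBy
    rw [this, mul_sub, sub_mul, hxb]
  have hnil : IsNilpotent ((x : R)) := by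
    rw [hbc]; exact hcomm.isNilpotent_add hb hc
  obtain ⟨n, hn⟩ := hnil
  exact ⟨n, Subtype.ext (by rw [SubmonoidClass.coe_pow]; simpa using hn)⟩

theorem stmt_1 (R : Type*) [Ring R] [Nontrivial R] (h : TwoNilSum R) :
    IsLocalRing (Subring.center R) ∧
      ∀ x : Subring.center R,
        x ∈ Ideal.jacobson (⊥ : Ideal (Subring.center R)) → IsNilpotent x := by
  constructor
  · apply IsLocalRing.of_isUnit_or_isUnit_one_sub_self
    intro a
    by_cases ha : IsUnit a
    · exact Or.inl ha
    · exact Or.inr ((key h a ha).isUnit_one_sub)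
  · intro x hx
    apply key h
    intro hu
    obtain ⟨u, rfl⟩ := hu
    rw [Ideal.mem_jacobson_bot] at hx
    have := hx (-(↑u⁻¹))
    simp at this
end

section
/- If R is a nontrivial ring with the 2-nil-sum property and I is a proper two-sided ideal of R, then every element of I is central and nilpotent. -/
theorem stmt_2 (R : Type*) [Ring R] [Nontrivial R] (h : TwoNilSum R)
    (I : TwoSidedIdeal R) (hI : I ≠ ⊤) :
    ∀ x ∈ I, x ∈ Set.center R ∧ IsNilpotent x := by
  intro x hx
  have hone : (1 : R) ∉ I := fun h1 => hI (I.one_mem_iff.mp h1)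
  -- x is not a central unit
  have hxnc : ¬ (x ∈ Set.center R ∧ IsUnit x) := by
    rintro ⟨-, hu⟩
    obtain ⟨u, rfl⟩ := hu
    exact hone (by simpa using I.mul_mem_left (↑u⁻¹) _ hx)
  obtain ⟨b, c, hb, hc, hbc⟩ := h x hxnc
  -- 1 + x is a central unit
  have h1x : (1 + x) ∈ Set.center R ∧ IsUnit (1 + x) := by
    by_contra hcon
    obtain ⟨b', c', hb', hc', hbc'⟩ := h (1 + x) hcon
    -- pass to the quotient R / I
    set f : R →+* I.ringCon.Quotient := I.ringCon.mk'
    have hx0 : f x = f 0 := I.ringCon.eq.mpr (I.mem_iff x |>.mp hx)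
    have key : f b' + f c' = 1 := by
      have := congrArg f hbc'
      simp only [map_add, map_one, hx0, map_zero, add_zero] at this
      exact this.symm
    have hub' : IsUnit (f b') := by
      have : f b' = 1 - f c' := by rw [← key]; abel
      rw [this]
      exact (hc'.map f).isUnit_one_sub
    have hnb' : IsNilpotent (f b') := hb'.map f
    have : (1 : I.ringCon.Quotient) = 0 := by
      obtain ⟨n, hn⟩ := hnb'
      have := hub'.pow n
      rw [hn] at this
      exact (isUnit_zero_iff.mp this).symm
    exact hone (I.mem_iff 1 |>.mpr (I.ringCon.eq.mp (by simpa using this)))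
  -- x is central
  have hxc : x ∈ Set.center R := by
    have := Set.add_mem_center h1x.1 (Set.neg_mem_center (Set.one_mem_center))
    simpa [add_comm, add_assoc] using this
  refine ⟨hxc, ?_⟩
  -- b and c commute since x = b + c is central
  have hcomm : Commute b c := by
    have hxb : b * x = x * b := ((Set.mem_center_iff.mp hxc).comm b).symm
    have hcx : c = x - b := by rw [hbc]; abel
    show b * c = c * b
    rw [hcx, mul_sub, sub_mul, hxb]
  rw [hbc]
  exact hcomm.isNilpotent_add hb hc
end

section
/- If R is a nontrivial ring with the 2-nil-sum property, then every proper two-sided ideal of R is contained in the Jacobson radical J(R). -/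
theorem stmt_3 (R : Type*) [Ring R] [Nontrivial R] (h : TwoNilSum R)
    (I : TwoSidedIdeal R) (hI : I ≠ ⊤) :
    ∀ x ∈ I, x ∈ Ideal.jacobson (⊥ : Ideal R) := by
  intro x hx
  rw [Ideal.mem_jacobson_iff]
  intro y
  have hunit : IsUnit (y * x + 1) := by
    by_cases hcu : (y * x + 1) ∈ Set.center R ∧ IsUnit (y * x + 1)
    · exact hcu.2
    obtain ⟨b, c, hb, hc, habc⟩ := h _ hcu
    exfalso
    apply hI
    apply I.eq_top
    have hceq : c = (1 - b) + y * x := by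
      have h1 : c = y * x + 1 - b := by rw [habc]; abel
      rw [h1]; abel
    -- pass to the quotient ring R / I
    let f : R →+* I.ringCon.Quotient := RingCon.mk' I.ringCon
    have hfyx : f (y * x) = 0 := by
      have : I.ringCon (y * x) 0 := (I.rel_iff _ _).2 (by simpa using I.mul_mem_left y x hx)
      exact (RingCon.eq _).2 this
    have hfc : f c = f (1 - b) := by
      rw [hceq, map_add, hfyx, add_zero]
    have hu : IsUnit (f (1 - b)) := by
      have : IsNilpotent (f b) := hb.map f
      simpa using this.isUnit_one_sub
    have hnil : IsNilpotent (f c) := hc.map f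
    obtain ⟨n, hn⟩ := hnil
    have h0 : IsUnit (0 : I.ringCon.Quotient) := by
      rw [← hn]
      exact (hfc ▸ hu).pow n
    have h01 : (0 : I.ringCon.Quotient) = 1 := (isUnit_zero_iff.mp h0)
    have : I.ringCon (1 : R) 0 := by
      refine (RingCon.eq _).1 ?_
      show f 1 = f 0
      simp [h01.symm]
    have := (I.rel_iff _ _).1 this
    simpa using this
  obtain ⟨u, hu⟩ := hunit
  refine ⟨(↑u⁻¹ : Rˣ), ?_⟩
  have : (↑u⁻¹ : R) * (y * x + 1) = 1 := by rw [← hu]; simp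
  have h2 : (↑u⁻¹ : R) * y * x + (↑u⁻¹ : R) - 1 = 0 := by
    rw [mul_add, mul_one] at this
    rw [mul_assoc, this, sub_self]
  simp [h2]
end

section
/- If R is a nontrivial ring with the 2-nil-sum property, then the Jacobson radical J(R) is nil and is contained in the center of R. -/
private lemma isUnit_one_add_of_mem_jacobson {R : Type*} [Ring R] {x : R}
    (hx : x ∈ Ideal.jacobson (⊥ : Ideal R)) : IsUnit (1 + x) := by
  obtain ⟨z, hz⟩ := Ideal.mem_jacobson_iff.1 hx 1
  rw [Ideal.mem_bot, sub_eq_zero, mul_one] at hz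
  -- hz : z * x + z = 1, i.e. z * (1 + x) = 1
  have hz1 : z * (1 + x) = 1 := by rw [mul_add, mul_one, add_comm]; exact hz
  have hzx : -(z * x) ∈ Ideal.jacobson (⊥ : Ideal R) :=
    neg_mem (Ideal.mul_mem_left _ z hx)
  obtain ⟨w, hw⟩ := Ideal.mem_jacobson_iff.1 hzx 1
  rw [Ideal.mem_bot, sub_eq_zero, mul_one] at hw
  -- hw : w * -(z * x) + w = 1, i.e. w * z = 1
  have hw1 : w * z = 1 := by
    have : z = 1 + -(z * x) := by rw [← hz]; abel
    rw [this, mul_add, mul_one, add_comm]; exact hw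
  have hweq : w = 1 + x := by
    calc w = w * (z * (1 + x)) := by rw [hz1, mul_one]
    _ = (w * z) * (1 + x) := by rw [mul_assoc]
    _ = 1 + x := by rw [hw1, one_mul]
  exact ⟨⟨1 + x, z, by rw [← hweq]; exact hw1, hz1⟩, rfl⟩

private lemma isUnit_add_of_mem_jacobson {R : Type*} [Ring R] {u x : R}
    (hu : IsUnit u) (hx : x ∈ Ideal.jacobson (⊥ : Ideal R)) : IsUnit (u + x) := by
  obtain ⟨U, rfl⟩ := hu
  have h1 : IsUnit (1 + (↑U⁻¹ * x)) :=
    isUnit_one_add_of_mem_jacobson (Ideal.mul_mem_left _ _ hx)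
  have : (U : R) * (1 + (↑U⁻¹ * x)) = (U : R) + x := by
    rw [mul_add, mul_one, ← mul_assoc, U.mul_inv, one_mul]
  exact this ▸ (U.isUnit.mul h1)

theorem stmt_4 (R : Type*) [Ring R] [Nontrivial R] (h : TwoNilSum R) :
    ∀ x ∈ Ideal.jacobson (⊥ : Ideal R), IsNilpotent x ∧ x ∈ Set.center R := by
  intro x hx
  -- x is not a unit
  have hxu : ¬ IsUnit x := by
    intro hux
    obtain ⟨X, rfl⟩ := hux
    have h1 : (-1 : R) ∈ Ideal.jacobson (⊥ : Ideal R) := by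
      have : ((-X⁻¹ : Rˣ) : R) * (X : R) ∈ Ideal.jacobson (⊥ : Ideal R) :=
        Ideal.mul_mem_left _ _ hx
      simpa [Units.inv_mul] using this
    have := isUnit_one_add_of_mem_jacobson h1
    rw [add_neg_cancel] at this
    exact not_isUnit_zero this
  -- 1 + x is central (and a unit)
  have hcen : (1 + x) ∈ Set.center R := by
    by_contra hc
    obtain ⟨b, c, hb, hcn, hsum⟩ := h (1 + x) (fun hh => hc hh.1)
    have hub : IsUnit (1 - b) := hb.isUnit_one_sub
    have hcu : IsUnit c := by
      have : c = (1 - b) + x := by rw [eq_sub_of_add_eq' hsum.symm]; noncomm_ring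
      rw [this]
      exact isUnit_add_of_mem_jacobson hub hx
    obtain ⟨m, hm⟩ := hcn
    have : IsUnit (c ^ m) := hcu.pow m
    rw [hm] at this
    exact not_isUnit_zero this
  -- x is central
  have hxc : x ∈ Set.center R := by
    rw [Semigroup.mem_center_iff] at hcen ⊢
    intro g
    have := hcen g
    have h2 : g * (1 + x) - g = (1 + x) * g - g := by rw [this]
    calc g * x = g * (1 + x) - g := by noncomm_ring
    _ = (1 + x) * g - g := h2
    _ = x * g := by noncomm_ring
  refine ⟨?_, hxc⟩
  -- x is nilpotent
  obtain ⟨b, c, hb, hc, hsum⟩ := h x (fun hh => hxu hh.2)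
  have hxcomm : ∀ g : R, g * x = x * g := Semigroup.mem_center_iff.1 hxc
  have hbc : Commute b c := by
    have hcx : c = x - b := eq_sub_of_add_eq' hsum.symm
    show b * c = c * b
    rw [hcx, mul_sub, sub_mul, ← hxcomm b]
  rw [hsum]
  exact hbc.isNilpotent_add hb hc
end

section
/- A nontrivial ring R satisfies the 2-nil-sum property if and only if R is either a simple ring with the 2-nil-sum property or a commutative local ring with nil Jacobson radical. -/
/-- In a two-sided-ideal quotient, if the image of `1` is nilpotent-plus-nilpotent
coming from a relation `1 + x = b + c` with `x ∈ I`, we get a contradiction unless `I = ⊤`.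
Key lemma: every element `x` of a proper two-sided ideal has `1 + x` a central unit. -/
lemma twoNilSum_key {R : Type*} [Ring R] (h : TwoNilSum R) (I : TwoSidedIdeal R)
    (hI : (1 : R) ∉ I) {x : R} (hx : x ∈ I) :
    (1 + x) ∈ Set.center R ∧ IsUnit (1 + x) := by
  by_contra hcon
  obtain ⟨b, c, hb, hc, habc⟩ := h _ hcon
  set f : R →+* I.ringCon.Quotient := RingCon.mk' I.ringCon with hf
  have hx0 : f x = 0 := by
    have h1 : I.ringCon x 0 := (TwoSidedIdeal.mem_iff I x).mp hx
    exact I.ringCon.eq.mpr h1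
  have h1q : (1 : I.ringCon.Quotient) = f b + f c := by
    have := congrArg f habc
    rw [map_add, map_add, hx0, add_zero, map_one] at this
    exact this
  have hfb : IsNilpotent (f b) := hb.map f
  have hub : IsUnit (f b) := by
    have : f b = 1 - f c := by rw [h1q, add_sub_cancel_right]
    rw [this]
    exact (hc.map f).isUnit_one_sub
  obtain ⟨n, hn⟩ := hfb
  have h0u : IsUnit (0 : I.ringCon.Quotient) := hn ▸ hub.pow n
  have h01 : (0 : I.ringCon.Quotient) = 1 := isUnit_zero_iff.mp h0u
  apply hI
  rw [TwoSidedIdeal.mem_iff]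
  have : f 1 = f 0 := by rw [map_one, map_zero, h01]
  exact I.ringCon.eq.mp this

theorem stmt_6 (R : Type*) [Ring R] [Nontrivial R] :
    TwoNilSum R ↔
      (IsSimpleRing R ∧ TwoNilSum R) ∨
        ((∀ a b : R, a * b = b * a) ∧ IsLocalRing R ∧
          ∀ x ∈ Ideal.jacobson (⊥ : Ideal R), IsNilpotent x) := by
  constructor
  · intro h
    by_cases hs : IsSimpleRing R
    · exact Or.inl ⟨hs, h⟩
    right
    -- obtain a nontrivial proper two-sided ideal
    have hex : ∃ I : TwoSidedIdeal R, I ≠ ⊥ ∧ I ≠ ⊤ := by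
      by_contra hcon
      push_neg at hcon
      refine hs ⟨⟨fun I => ?_⟩⟩
      · by_cases hb : I = ⊥
        · exact Or.inl hb
        · exact Or.inr (hcon I hb)
    obtain ⟨I, hIbot, hItop⟩ := hex
    have h1I : (1 : R) ∉ I := fun h1 => hItop (I.eq_top h1)
    obtain ⟨z, hzI, hz0⟩ : ∃ z, z ∈ I ∧ z ≠ 0 := by
      by_contra hcon
      push_neg at hcon
      apply hIbot
      refine le_antisymm (fun x hx => ?_) bot_le
      exact (TwoSidedIdeal.mem_bot R).mpr (hcon x hx)
    -- elements of proper two-sided ideals are central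
    have hxc : ∀ x ∈ I, ∀ g : R, g * x = x * g := by
      intro x hx g
      have hc := (twoNilSum_key h I h1I hx).1
      have := Semigroup.mem_center_iff.mp hc g
      rw [mul_add, add_mul, mul_one, one_mul] at this
      exact add_left_cancel this
    have hzc : ∀ g : R, g * z = z * g := hxc z hzI
    have hza : ∀ a g : R, g * (z * a) = (z * a) * g :=
      fun a => hxc _ (I.mul_mem_right z a hzI)
    have hzcomm : ∀ a r : R, z * (a * r - r * a) = 0 := by
      intro a r
      have h1 : z * (a * r) = z * (r * a) := by
        calc z * (a * r) = (z * a) * r := by rw [mul_assoc]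
          _ = r * (z * a) := (hza a r).symm
          _ = (r * z) * a := by rw [mul_assoc]
          _ = (z * r) * a := by rw [hzc r]
          _ = z * (r * a) := by rw [mul_assoc]
      rw [mul_sub, h1, sub_self]
    -- the annihilator of z
    set A : TwoSidedIdeal R := TwoSidedIdeal.mk' {t | z * t = 0}
      (by simp) (fun {x y} hx hy => by simp only [Set.mem_setOf_eq] at *; rw [mul_add, hx, hy, add_zero])
      (fun {x} hx => by simp only [Set.mem_setOf_eq] at *; rw [mul_neg, hx, neg_zero])
      (fun {x y} hy => by
        simp only [Set.mem_setOf_eq] at *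
        rw [← mul_assoc, ← hzc x, mul_assoc, hy, mul_zero])
      (fun {x y} hx => by
        simp only [Set.mem_setOf_eq] at *
        rw [← mul_assoc, hx, zero_mul]) with hA
    have memA : ∀ t : R, t ∈ A ↔ z * t = 0 := by
      intro t; rw [hA, TwoSidedIdeal.mem_mk']; rfl
    have hcommA : ∀ a r : R, a * r - r * a ∈ A :=
      fun a r => (memA _).mpr (hzcomm a r)
    set f : R →+* A.ringCon.Quotient := RingCon.mk' A.ringCon with hfdef
    have hfcomm : ∀ x y : R, f x * f y = f y * f x := by
      intro x y
      have h0 : f (x * y - y * x) = 0 := by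
        have h1 : A.ringCon (x * y - y * x) 0 := (TwoSidedIdeal.mem_iff A _).mp (hcommA x y)
        exact A.ringCon.eq.mpr h1
      rw [map_sub, sub_eq_zero] at h0
      rw [← map_mul, ← map_mul, h0]
    -- every unit is central
    have hunits : ∀ u : R, IsUnit u → ∀ g : R, g * u = u * g := by
      intro u hu
      by_contra hnc
      push_neg at hnc
      have hncen : ¬ (u ∈ Set.center R ∧ IsUnit u) := by
        rintro ⟨hc, -⟩
        obtain ⟨g, hg⟩ := hnc
        exact hg (Semigroup.mem_center_iff.mp hc g)
      obtain ⟨b, c, hb, hc, habc⟩ := h u hncen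
      have hcomq : Commute (f b) (f c) := hfcomm b c
      have hnil : IsNilpotent (f u) := by
        rw [habc, map_add]
        exact hcomq.isNilpotent_add (hb.map f) (hc.map f)
      have hun : IsUnit (f u) := hu.map f
      obtain ⟨n, hn⟩ := hnil
      have h0u : IsUnit (0 : A.ringCon.Quotient) := hn ▸ hun.pow n
      have h01 : (0 : A.ringCon.Quotient) = 1 := isUnit_zero_iff.mp h0u
      have h1A : (1 : R) ∈ A := by
        rw [TwoSidedIdeal.mem_iff]
        have : f 1 = f 0 := by rw [map_one, map_zero, h01]
        exact A.ringCon.eq.mp this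
      have : z * 1 = 0 := (memA 1).mp h1A
      rw [mul_one] at this
      exact hz0 this
    -- every nilpotent is central
    have hnilc : ∀ b : R, IsNilpotent b → ∀ g : R, g * b = b * g := by
      intro b hb g
      have hu : IsUnit (1 + b) := by
        have := hb.neg.isUnit_one_sub
        rwa [sub_neg_eq_add] at this
      have := hunits _ hu g
      rw [mul_add, add_mul, mul_one, one_mul] at this
      exact add_left_cancel this
    -- commutativity
    have hcomm : ∀ a b : R, a * b = b * a := by
      have hcen : ∀ a g : R, g * a = a * g := by
        intro a
        by_cases hca : a ∈ Set.center R ∧ IsUnit a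
        · exact fun g => Semigroup.mem_center_iff.mp hca.1 g
        · obtain ⟨b, c, hb, hc, rfl⟩ := h a hca
          intro g
          rw [mul_add, add_mul, hnilc b hb g, hnilc c hc g]
      exact fun a b => hcen b a
    -- every nonunit is nilpotent
    have hnonu : ∀ a : R, ¬ IsUnit a → IsNilpotent a := by
      intro a ha
      obtain ⟨b, c, hb, hc, rfl⟩ := h a (fun hh => ha hh.2)
      have hcm : Commute b c := hcomm b c
      exact hcm.isNilpotent_add hb hc
    refine ⟨hcomm, ?_, ?_⟩
    · letI : CommRing R := { ‹Ring R› with mul_comm := hcomm }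
      refine IsLocalRing.of_nonunits_add ?_
      intro a b ha hb
      rw [mem_nonunits_iff] at *
      have hna := hnonu a ha
      have hnb := hnonu b hb
      have hcm : Commute a b := hcomm a b
      exact (hcm.isNilpotent_add hna hnb).not_isUnit
    · intro x hx
      obtain ⟨M, hM⟩ := Ideal.exists_maximal R
      have hxM : x ∈ M := by
        rw [Ideal.jacobson] at hx
        exact Submodule.mem_sInf.mp hx M ⟨bot_le, hM⟩
      have hnu : ¬ IsUnit x := fun hu => hM.ne_top (M.eq_top_of_isUnit_mem hxM hu)
      exact hnonu x hnu
  · rintro (⟨-, h⟩ | ⟨hcomm, hloc, hnil⟩)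
    · exact h
    intro a ha
    have hC : a ∈ Set.center R := Semigroup.mem_center_iff.mpr (fun g => hcomm g a)
    have hnu : ¬ IsUnit a := fun hu => ha ⟨hC, hu⟩
    letI : CommRing R := { ‹Ring R› with mul_comm := hcomm }
    haveI : IsLocalRing R := hloc
    have haJ : a ∈ Ideal.jacobson (⊥ : Ideal R) := by
      rw [Ideal.jacobson]
      refine Submodule.mem_sInf.mpr ?_
      rintro M ⟨-, hM⟩
      rw [IsLocalRing.eq_maximalIdeal hM]
      exact (IsLocalRing.mem_maximalIdeal a).mpr hnu
    exact ⟨a, 0, hnil a haJ, IsNilpotent.zero, (add_zero a).symm⟩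
end

section
/- If R is a nontrivial ring with the 2-nil-sum property that is not simple, then R is commutative. -/
section Aux

variable {R : Type*} [Ring R]

/-- Every element of a proper "ideal-like" set is central, given 2-nil-sum. -/
lemma TwoNilSum.central_of_proper (h : TwoNilSum R) (S : Set R)
    (hadd : ∀ x ∈ S, ∀ y ∈ S, x + y ∈ S)
    (hml : ∀ (r : R), ∀ x ∈ S, r * x ∈ S)
    (hmr : ∀ (r : R), ∀ x ∈ S, x * r ∈ S)
    (hone : (1 : R) ∉ S) :
    ∀ a ∈ S, ∀ g : R, g * a = a * g := by
  intro a ha g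
  have h0 : (0 : R) ∈ S := by simpa using hml 0 a ha
  by_cases hc : ((1 : R) + a) ∈ Set.center R ∧ IsUnit (1 + a)
  · have := (Semigroup.mem_center_iff.mp hc.1) g
    have : g + g * a = g + a * g := by
      calc g + g * a = g * (1 + a) := by noncomm_ring
        _ = (1 + a) * g := this
        _ = g + a * g := by noncomm_ring
    exact add_left_cancel this
  · exfalso
    obtain ⟨p, q, hp, hq, hpq⟩ := h _ hc
    have hu : IsUnit (1 - p) := hp.isUnit_one_sub
    have hqe : q = (1 - p) + a := by
      have h' : (1 - p) + a - q = (1 + a) - (p + q) := by noncomm_ring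
      rw [← hpq, sub_self] at h'
      exact (sub_eq_zero.mp h').symm
    have key : ∀ m : ℕ, ∃ i ∈ S, q ^ m = (1 - p) ^ m + i := by
      intro m
      induction m with
      | zero => exact ⟨0, h0, by simp⟩
      | succ n ih =>
        obtain ⟨i, hi, hqn⟩ := ih
        refine ⟨(1 - p) ^ n * a + (i * (1 - p) + i * a), ?_, ?_⟩
        · exact hadd _ (hml _ _ ha) _ (hadd _ (hmr _ _ hi) _ (hmr _ _ hi))
        · rw [pow_succ, pow_succ, hqn, hqe]; noncomm_ring
    obtain ⟨k, hk⟩ := hq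
    obtain ⟨i, hi, hqk⟩ := key k
    have hpow : (1 - p) ^ k ∈ S := by
      have h2 : (1 - p) ^ k + i = 0 := by rw [← hqk, hk]
      have h3 : (1 - p) ^ k = (-1 : R) * i := by
        rw [neg_one_mul]
        exact eq_neg_of_add_eq_zero_left h2
      rw [h3]; exact hml _ _ hi
    obtain ⟨v, hv⟩ := hu.pow k
    apply hone
    have : (1 : R) = (↑v⁻¹ : R) * (1 - p) ^ k := by
      rw [← hv]; exact (Units.inv_mul v).symm
    rw [this]
    exact hml _ _ hpow

/-- Elements of an ideal-like set all of whose elements are central kill commutators. -/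
lemma kill_commutator (S : Set R)
    (hmr : ∀ (r : R), ∀ x ∈ S, x * r ∈ S)
    (hc : ∀ x ∈ S, ∀ g : R, g * x = x * g) :
    ∀ a ∈ S, ∀ r x : R, a * (r * x - x * r) = 0 := by
  intro a ha r x
  have h1 : a * (r * x) = a * (x * r) := by
    calc a * (r * x) = (a * r) * x := by rw [mul_assoc]
      _ = x * (a * r) := (hc _ (hmr r a ha) x).symm
      _ = (x * a) * r := by rw [mul_assoc]
      _ = (a * x) * r := by rw [hc a ha x]
      _ = a * (x * r) := by rw [mul_assoc]
  rw [mul_sub, h1, sub_self]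

end Aux

theorem stmt_7 (R : Type*) [Ring R] [Nontrivial R] (h : TwoNilSum R)
    (hs : ¬ IsSimpleRing R) : ∀ a b : R, a * b = b * a := by
  -- Extract a nonzero proper two-sided ideal
  obtain ⟨I, hIbot, hItop⟩ : ∃ I : TwoSidedIdeal R, I ≠ ⊥ ∧ I ≠ ⊤ := by
    by_contra hI
    push_neg at hI
    exact hs ⟨⟨fun I => or_iff_not_imp_left.mpr (hI I)⟩⟩
  have hone : (1 : R) ∉ I := fun h1 => hItop (TwoSidedIdeal.one_mem_iff I |>.mp h1)
  -- All elements of I are central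
  have hIcent : ∀ a ∈ I, ∀ g : R, g * a = a * g :=
    h.central_of_proper (I : Set R)
      (fun x hx y hy => I.add_mem hx hy)
      (fun r x hx => I.mul_mem_left r x hx)
      (fun r x hx => I.mul_mem_right x r hx)
      hone
  obtain ⟨a₀, ha₀I, ha₀⟩ : ∃ a ∈ I, a ≠ (0 : R) := by
    by_contra hA
    push_neg at hA
    refine hIbot (TwoSidedIdeal.ext fun x => ?_)
    simp only [TwoSidedIdeal.mem_bot]
    exact ⟨fun hx => hA x hx, fun hx => by rw [hx]; exact I.zero_mem⟩
  -- a₀ kills all commutators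
  have hkill : ∀ r x : R, a₀ * (r * x - x * r) = 0 :=
    kill_commutator (I : Set R) (fun r x hx => I.mul_mem_right x r hx) hIcent a₀ ha₀I
  -- The annihilator of a₀ is an ideal-like set containing all commutators
  have ha₀c : ∀ g : R, g * a₀ = a₀ * g := hIcent a₀ ha₀I
  set A : Set R := {x | a₀ * x = 0} with hA
  have hAadd : ∀ x ∈ A, ∀ y ∈ A, x + y ∈ A := by
    intro x hx y hy; simp only [hA, Set.mem_setOf_eq] at *; rw [mul_add, hx, hy, add_zero]
  have hAmr : ∀ (r : R), ∀ x ∈ A, x * r ∈ A := by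
    intro r x hx; simp only [hA, Set.mem_setOf_eq] at *; rw [← mul_assoc, hx, zero_mul]
  have hAml : ∀ (r : R), ∀ x ∈ A, r * x ∈ A := by
    intro r x hx; simp only [hA, Set.mem_setOf_eq] at *
    rw [← mul_assoc, ← ha₀c r, mul_assoc, hx, mul_zero]
  have hAone : (1 : R) ∉ A := by
    simp only [hA, Set.mem_setOf_eq, mul_one]; exact ha₀
  have hAcent : ∀ x ∈ A, ∀ g : R, g * x = x * g :=
    h.central_of_proper A hAadd hAml hAmr hAone
  -- All commutators are central
  have hcc : ∀ r x : R, ∀ g : R, g * (r * x - x * r) = (r * x - x * r) * g := by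
    intro r x
    exact hAcent _ (hkill r x)
  -- Commutators kill commutators
  have hckill : ∀ a ∈ A, ∀ r x : R, a * (r * x - x * r) = 0 :=
    kill_commutator A hAmr hAcent
  -- Now the main argument
  intro x y
  by_contra hxy
  -- x is not central, so it is a sum of two nilpotents; one of them is noncentral
  have hxnc : ¬ (x ∈ Set.center R ∧ IsUnit x) := by
    rintro ⟨hc, -⟩
    exact hxy ((Semigroup.mem_center_iff.mp hc) y).symm
  obtain ⟨p, q, hp, hq, hpq⟩ := h x hxnc
  obtain ⟨b, hbnil, z, hbz⟩ : ∃ b : R, IsNilpotent b ∧ ∃ z : R, b * z ≠ z * b := by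
    by_cases hpc : ∀ g : R, p * g = g * p
    · by_cases hqc : ∀ g : R, q * g = g * q
      · exfalso
        apply hxy
        rw [hpq, add_mul, mul_add, hpc y, hqc y]
      · push_neg at hqc
        obtain ⟨z, hz⟩ := hqc
        exact ⟨q, hq, z, hz⟩
    · push_neg at hpc
      obtain ⟨z, hz⟩ := hpc
      exact ⟨p, hp, z, hz⟩
  set c : R := b * z - z * b with hc
  have hc0 : c ≠ 0 := sub_ne_zero.mpr hbz
  have hccen : ∀ g : R, g * c = c * g := hcc b z
  have hcA : c ∈ A := hkill b z
  have hckc : ∀ r w : R, c * (r * w - w * r) = 0 := hckill c hcA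
  -- c * b^k is central for every k
  have hcbk_cent : ∀ k : ℕ, ∀ g : R, g * (c * b ^ k) = (c * b ^ k) * g := by
    intro k g
    have h1 : c * (b ^ k * g - g * b ^ k) = 0 := hckc (b ^ k) g
    have h2 : c * (b ^ k * g) = c * (g * b ^ k) := by
      rw [mul_sub] at h1
      exact sub_eq_zero.mp h1
    calc g * (c * b ^ k) = (g * c) * b ^ k := by rw [mul_assoc]
      _ = (c * g) * b ^ k := by rw [hccen g]
      _ = c * (g * b ^ k) := by rw [mul_assoc]
      _ = c * (b ^ k * g) := h2.symm
      _ = (c * b ^ k) * g := by rw [mul_assoc]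
  -- By induction, c * b^k ≠ 0 for all k
  have hne : ∀ k : ℕ, c * b ^ k ≠ 0 := by
    intro k
    induction k with
    | zero => simpa using hc0
    | succ n ih =>
      set d : R := c * b ^ n with hd
      have hdcen : ∀ g : R, g * d = d * g := hcbk_cent n
      -- annihilator of d
      set D : Set R := {w | d * w = 0} with hD
      have hDadd : ∀ w ∈ D, ∀ v ∈ D, w + v ∈ D := by
        intro w hw v hv; simp only [hD, Set.mem_setOf_eq] at *
        rw [mul_add, hw, hv, add_zero]
      have hDmr : ∀ (r : R), ∀ w ∈ D, w * r ∈ D := by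
        intro r w hw; simp only [hD, Set.mem_setOf_eq] at *
        rw [← mul_assoc, hw, zero_mul]
      have hDml : ∀ (r : R), ∀ w ∈ D, r * w ∈ D := by
        intro r w hw; simp only [hD, Set.mem_setOf_eq] at *
        rw [← mul_assoc, ← hdcen r, mul_assoc, hw, mul_zero]
      have hDone : (1 : R) ∉ D := by
        simp only [hD, Set.mem_setOf_eq, mul_one]; exact ih
      have hDcent : ∀ w ∈ D, ∀ g : R, g * w = w * g :=
        h.central_of_proper D hDadd hDml hDmr hDone
      -- b is not central, hence b ∉ D, hence d * b ≠ 0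
      intro hcontra
      have hbD : b ∈ D := by
        simp only [hD, Set.mem_setOf_eq]
        rw [hd] at *
        calc c * b ^ n * b = c * b ^ (n + 1) := by rw [pow_succ, mul_assoc]
          _ = 0 := hcontra
      have : z * b = b * z := hDcent b hbD z
      exact hbz this.symm
  obtain ⟨n, hn⟩ := hbnil
  exact hne n (by rw [hn, mul_zero])
end

section
/- Let R be a nontrivial ring with the 2-nil-sum property and let 0 ≠ x ∈ J(R). Then for all a, b ∈ R, (ab - ba)x = 0; that is, every additive commutator annihilates x. -/
/-- A nilpotent element has no left inverse in a nontrivial ring. -/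
lemma nilpotent_no_left_inv {R : Type*} [Ring R] [Nontrivial R] {b z : R}
    (hb : IsNilpotent b) (hz : z * b = 1) : False := by
  obtain ⟨k, hk⟩ := hb
  have key : ∀ n, z ^ n * b ^ n = 1 := by
    intro n
    induction n with
    | zero => simp
    | succ n ih =>
      rw [pow_succ, pow_succ', mul_assoc, ← mul_assoc z, hz, one_mul]
      exact ih
  have h1 := key k
  rw [hk, mul_zero] at h1
  exact one_ne_zero h1.symm

/-- In a nontrivial 2-nil-sum ring, the Jacobson radical is central. -/
lemma twoNilSum_jacobson_central {R : Type*} [Ring R] [Nontrivial R] (h : TwoNilSum R)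
    {j : R} (hj : j ∈ Ideal.jacobson (⊥ : Ideal R)) : j ∈ Set.center R := by
  by_cases hcu : (1 + j) ∈ Set.center R ∧ IsUnit (1 + j)
  · have h1 : (1 : R) + j + (-1) ∈ Set.center R :=
      Set.add_mem_center hcu.1 (Set.neg_mem_center Set.one_mem_center)
    simpa using h1
  · obtain ⟨b, c, hb, hc, hbc⟩ := h _ hcu
    -- b = (1 - c) + j = (1 - c) * (1 + (1-c)⁻¹ j), which has a left inverse;
    -- this contradicts nilpotency of b.
    obtain ⟨u, hu⟩ := hc.isUnit_one_sub
    set v : R := ↑u⁻¹ with hv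
    have hvj : v * j ∈ Ideal.jacobson (⊥ : Ideal R) :=
      (Ideal.jacobson (⊥ : Ideal R)).mul_mem_left _ hj
    obtain ⟨z, hz⟩ := Ideal.mem_jacobson_iff.1 hvj 1
    rw [Ideal.mem_bot] at hz
    have hz' : z * (1 + v * j) = 1 := by
      have := sub_eq_zero.1 hz
      calc z * (1 + v * j) = z * 1 * (v * j) + z := by noncomm_ring
        _ = 1 := this
    have hbeq : b = (↑u : R) * (1 + v * j) := by
      rw [mul_add, mul_one, ← mul_assoc, hv, u.mul_inv, one_mul, hu]
      have hb2 : b = 1 + j - c := eq_sub_of_add_eq hbc.symm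
      rw [hb2]; abel
    exact (nilpotent_no_left_inv hb (z := z * ↑u⁻¹)
      (by rw [hbeq, mul_assoc, ← mul_assoc (↑u⁻¹ : R), u.inv_mul, one_mul, hz'])).elim

theorem stmt_8 (R : Type*) [Ring R] [Nontrivial R] (h : TwoNilSum R)
    (x : R) (hx0 : x ≠ 0) (hxJ : x ∈ Ideal.jacobson (⊥ : Ideal R)) :
    ∀ a b : R, (a * b - b * a) * x = 0 := by
  intro a b
  have hx : x ∈ Set.center R := twoNilSum_jacobson_central h hxJ
  have hbx : b * x ∈ Set.center R :=
    twoNilSum_jacobson_central h ((Ideal.jacobson (⊥ : Ideal R)).mul_mem_left b hxJ)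
  have h1 : a * (b * x) = (b * x) * a := ((Set.mem_center_iff.1 hbx).comm a).symm
  have h2 : x * a = a * x := (Set.mem_center_iff.1 hx).comm a
  have key : a * b * x = b * a * x := by
    rw [mul_assoc, h1, mul_assoc, h2, ← mul_assoc]
  rw [sub_mul, key, sub_self]
end

section
/- If R is a nontrivial ring in which every non central-unit a can be written as a = b + c with b² = 0 and c nilpotent, then R is commutative. -/
section Aux

variable {R : Type*} [Ring R]

private lemma pow_idem (e : R) (he : e * e = e) : ∀ n : ℕ, e ^ (n + 1) = e := by
  intro n
  induction n with
  | zero => simp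
  | succ k ih => rw [pow_succ, ih, he]

private lemma lemA (e β : R) (he : e * e = e) (hβ : β * β = 0)
    (hnil : IsNilpotent (e - β)) : e = 0 := by
  obtain ⟨n, hn⟩ := hnil
  set γ : R := e - β with hγdef
  rcases n with _ | N
  · have h1 : (1 : R) = 0 := by simpa using hn
    calc e = e * 1 := by rw [mul_one]
    _ = e * 0 := by rw [h1]
    _ = 0 := by rw [mul_zero]
  · set x : R := e * β * e with hxdef
    have hex : e * x = x := by
      rw [hxdef, ← mul_assoc, ← mul_assoc, he]
    set u : ℕ → R := fun k => e * γ ^ k * e with hudef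
    have hu : ∀ k, u k = e * γ ^ k * e := fun k => rfl
    have hu0 : u 0 = e := by rw [hu 0, pow_zero, mul_one, he]
    have hγe : γ * e = e - β * e := by
      rw [hγdef, sub_mul, he]
    have hγβ : γ * β = e * β := by
      rw [hγdef, sub_mul, hβ, sub_zero]
    have key : γ * (γ * e) = γ * e - e * (β * e) := by
      conv_lhs => rw [hγe, mul_sub, ← mul_assoc, hγβ, mul_assoc]
    have hrec : ∀ k, u (k + 2) = u (k + 1) - u k * x := by
      intro k
      rw [hu (k+2), hu (k+1), hu k]
      calc e * γ ^ (k+2) * e = e * (γ^k * (γ * (γ * e))) := by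
            rw [pow_succ, pow_succ]; simp only [mul_assoc]
      _ = e * (γ^k * (γ*e)) - e * (γ^k * (e * (β * e))) := by
            rw [key, mul_sub, mul_sub]
      _ = e * γ^(k+1) * e - (e * γ^k * e) * (e * β * e) := by
            rw [pow_succ]; simp only [mul_assoc]
            rw [← mul_assoc e e (β * e), he]
    have huN1 : u (N + 1) = 0 := by
      rw [hu (N+1), hn, mul_zero, zero_mul]
    have huN2 : u (N + 2) = 0 := by
      rw [hu (N+2), pow_succ, hn, zero_mul, mul_zero, zero_mul]
    have hT : ∀ j : ℕ, (∀ k, k + j = N + 1 → u k * x ^ j = 0) ∧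
        (∀ k, k + (j + 1) = N + 1 → u k * x ^ (j + 1) = 0) := by
      intro j
      induction j with
      | zero =>
        constructor
        · intro k hk
          have hk' : k = N + 1 := by omega
          rw [hk', pow_zero, mul_one, huN1]
        · intro k hk
          have hkN : k = N := by omega
          have hh := hrec N
          rw [huN1, huN2] at hh
          rw [zero_sub, eq_comm, neg_eq_zero] at hh
          rw [hkN, pow_one]; exact hh
      | succ j ih =>
        refine ⟨ih.2, ?_⟩
        intro k hk
        have hkx : u k * x = u (k + 1) - u (k + 2) := by
          rw [hrec k]; abel
        calc u k * x ^ (j + 2) = (u k * x) * x ^ (j + 1) := by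
              rw [pow_succ' x (j+1), ← mul_assoc]
        _ = (u (k + 1) - u (k + 2)) * x ^ (j + 1) := by rw [hkx]
        _ = u (k + 1) * x ^ (j + 1) - u (k + 2) * x ^ (j + 1) := by rw [sub_mul]
        _ = 0 - (u (k + 2) * x ^ j) * x := by
              rw [ih.2 (k + 1) (by omega), pow_succ, ← mul_assoc]
        _ = 0 := by rw [ih.1 (k + 2) (by omega), zero_mul, sub_zero]
    have hxN : x ^ (N + 1) = 0 := by
      have h0 : u 0 * x ^ (N + 1) = 0 := (hT (N + 1)).1 0 (by omega)
      rw [hu0] at h0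
      rwa [pow_succ' x N, ← mul_assoc, hex, ← pow_succ' x N] at h0
    have hstruct : ∀ k : ℕ, (∃ s : R, u k = e - x * s ∧ x * s = s * x) ∧
        (∃ s : R, u (k + 1) = e - x * s ∧ x * s = s * x) := by
      intro k
      induction k with
      | zero =>
        constructor
        · exact ⟨0, by rw [hu0, mul_zero, sub_zero], by rw [mul_zero, zero_mul]⟩
        · refine ⟨1, ?_, by rw [mul_one, one_mul]⟩
          rw [mul_one, hu 1, pow_one, mul_assoc, hγe, mul_sub, he, hxdef, mul_assoc]
      | succ k ih =>
        refine ⟨ih.2, ?_⟩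
        obtain ⟨s0, hs0, hc0⟩ := ih.1
        obtain ⟨s1, hs1, hc1⟩ := ih.2
        refine ⟨s1 + 1 - s0 * x, ?_, ?_⟩
        · rw [hrec k, hs0, hs1, sub_mul, hex, mul_sub, mul_add, mul_one,
            mul_assoc x s0 x]
          abel
        · rw [mul_sub, sub_mul, mul_add, add_mul, mul_one, one_mul, hc1,
            ← mul_assoc x s0 x, hc0]
    obtain ⟨s, hs, hcs⟩ := (hstruct N).2
    rw [huN1] at hs
    have hes : e = x * s := sub_eq_zero.mp hs.symm
    have hcomm : Commute x s := hcs
    calc e = e ^ (N + 1) := (pow_idem e he N).symm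
    _ = (x * s) ^ (N + 1) := by rw [← hes]
    _ = x ^ (N + 1) * s ^ (N + 1) := hcomm.mul_pow (N + 1)
    _ = 0 := by rw [hxN, zero_mul]

/-- In a ring satisfying the decomposition hypothesis, idempotents are trivial. -/
private lemma idem01
    (h : ∀ a : R, ¬ (a ∈ Set.center R ∧ IsUnit a) →
      ∃ b c : R, b ^ 2 = 0 ∧ IsNilpotent c ∧ a = b + c)
    (e : R) (he : e * e = e) : e = 0 ∨ e = 1 := by
  by_cases hu : IsUnit e
  · right
    have h1 : e * e = e * 1 := by rw [mul_one, he]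
    exact hu.mul_left_cancel h1
  · left
    obtain ⟨b, c, hb, hc, heq⟩ := h e (fun hco => hu hco.2)
    have hbb : b * b = 0 := by rw [← pow_two]; exact hb
    have hnil : IsNilpotent (e - b) := by
      have h2 : e - b = c := by rw [heq]; abel
      rw [h2]; exact hc
    exact lemA e b he hbb hnil

/-- Key lemma: a difference of two square-zero elements is never a unit. -/
private lemma lemB [Nontrivial R]
    (h : ∀ a : R, ¬ (a ∈ Set.center R ∧ IsUnit a) →
      ∃ b c : R, b ^ 2 = 0 ∧ IsNilpotent c ∧ a = b + c)
    (b β : R) (hb : b * b = 0) (hβ : β * β = 0) (hδ : IsUnit (b - β)) : False := by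
  set z : R := b * β + β * b with hzdef
  have hδ2 : (b - β) * (b - β) = -z := by
    have expand : (b - β) * (b - β) = b*b - b*β - β*b + β*β := by noncomm_ring
    rw [expand, hb, hβ, hzdef]; abel
  have hzu : IsUnit z := by
    have h1 : IsUnit ((b - β) * (b - β)) := hδ.mul hδ
    rw [hδ2] at h1
    simpa using h1.neg
  obtain ⟨v, hv⟩ := hzu
  set w : R := ((v⁻¹ : Rˣ) : R) with hwdef
  have hw1 : z * w = 1 := by rw [hwdef, ← hv]; exact_mod_cast v.mul_inv
  have hw2 : w * z = 1 := by rw [hwdef, ← hv]; exact_mod_cast v.inv_mul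
  have hbzl : b * z = b * β * b := by
    rw [hzdef, mul_add, ← mul_assoc b b β, ← mul_assoc b β b, hb, zero_mul, zero_add]
  have hbzr : z * b = b * β * b := by
    rw [hzdef, add_mul, mul_assoc β b b, hb, mul_zero, add_zero]
  have hβzl : β * z = β * b * β := by
    rw [hzdef, mul_add, ← mul_assoc β b β, ← mul_assoc β β b, hβ, zero_mul, add_zero]
  have hβzr : z * β = β * b * β := by
    rw [hzdef, add_mul, mul_assoc b β β, hβ, mul_zero, zero_add]
  have hbz : b * z = z * b := by rw [hbzl, hbzr]
  have hβz : β * z = z * β := by rw [hβzl, hβzr]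
  have hwb : w * b = b * w := by
    calc w * b = w * b * (z * w) := by rw [hw1, mul_one]
    _ = w * (b * z) * w := by rw [mul_assoc w b (z*w), ← mul_assoc b z w, ← mul_assoc w (b*z) w]
    _ = w * (z * b) * w := by rw [hbz]
    _ = (w * z) * (b * w) := by rw [mul_assoc w (z*b) w, mul_assoc z b w, ← mul_assoc w z (b*w)]
    _ = b * w := by rw [hw2, one_mul]
  have hwβ : w * β = β * w := by
    calc w * β = w * β * (z * w) := by rw [hw1, mul_one]
    _ = w * (β * z) * w := by rw [mul_assoc w β (z*w), ← mul_assoc β z w, ← mul_assoc w (β*z) w]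
    _ = w * (z * β) * w := by rw [hβz]
    _ = (w * z) * (β * w) := by rw [mul_assoc w (z*β) w, mul_assoc z β w, ← mul_assoc w z (β*w)]
    _ = β * w := by rw [hw2, one_mul]
  have hwbβ : w * (b * β) = (b * β) * w := by
    rw [← mul_assoc, hwb, mul_assoc b w β, hwβ, ← mul_assoc]
  have key1 : (b * β) * z = (b * β) * (b * β) := by
    rw [hzdef, mul_add, mul_assoc b β (β*b), ← mul_assoc β β b, hβ, zero_mul,
      mul_zero, add_zero]
  have hEE : (b*β*w) * (b*β*w) = b*β*w := by
    calc (b*β*w)*(b*β*w) = (b*β)*((w*(b*β))*w) := by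
          rw [mul_assoc (b*β) w (b*β*w), ← mul_assoc w (b*β) w]
    _ = (b*β)*(((b*β)*w)*w) := by rw [hwbβ]
    _ = ((b*β)*(b*β))*(w*w) := by
          rw [mul_assoc (b*β) w w, ← mul_assoc (b*β) (b*β) (w*w)]
    _ = ((b*β)*z)*(w*w) := by rw [key1]
    _ = (b*β)*w := by rw [mul_assoc (b*β) z (w*w), ← mul_assoc z w w, hw1, one_mul]
  rcases idem01 h (b*β*w) hEE with hE0 | hE1
  · have hbβ : b*β = 0 := by
      calc b*β = (b*β)*(w*z) := by rw [hw2, mul_one]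
      _ = ((b*β)*w)*z := by rw [mul_assoc (b*β) w z]
      _ = 0 := by rw [hE0, zero_mul]
    have hbz0 : b*z = 0 := by rw [hbzl, hbβ, zero_mul]
    have hb0 : b = 0 := by
      calc b = b*(z*w) := by rw [hw1, mul_one]
      _ = (b*z)*w := by rw [mul_assoc b z w]
      _ = 0 := by rw [hbz0, zero_mul]
    have h00 : (b - β) * (b - β) = 0 := by rw [hb0, zero_sub, neg_mul_neg, hβ]
    have hu0 : IsUnit (0:R) := h00 ▸ (hδ.mul hδ)
    exact not_isUnit_zero hu0
  · have hb1 : b * (β * w) = 1 := by rw [← mul_assoc]; exact hE1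
    have hb0 : b = 0 := by
      calc b = b * (b * (β*w)) := by rw [hb1, mul_one]
      _ = (b*b)*(β*w) := by rw [mul_assoc b b (β*w)]
      _ = 0 := by rw [hb, zero_mul]
    have h10 : (1:R) = 0 := by rw [← hb1, hb0, zero_mul]
    exact one_ne_zero h10

/-- square-zero elements are central -/
private lemma sqzero_central [Nontrivial R]
    (h : ∀ a : R, ¬ (a ∈ Set.center R ∧ IsUnit a) →
      ∃ b c : R, b ^ 2 = 0 ∧ IsNilpotent c ∧ a = b + c)
    (b : R) (hb : b * b = 0) : ∀ x : R, x * b = b * x := by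
  by_cases hcen : ∀ y : R, y * (1 + b) = (1 + b) * y
  · intro x
    have h1 := hcen x
    rw [mul_add, add_mul, mul_one, one_mul] at h1
    exact add_left_cancel h1
  · exfalso
    have hnc : ¬ ((1 + b) ∈ Set.center R ∧ IsUnit (1 + b)) := by
      intro hco
      exact hcen (fun y => ((Set.mem_center_iff.mp hco.1).comm y).symm)
    obtain ⟨β, c, hβ, hcnil, heq⟩ := h (1 + b) hnc
    have hββ : β * β = 0 := by rw [← pow_two]; exact hβ
    have hδeq : b - β = c - 1 := by
      have h1 : (1:R) + b = β + c := heq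
      calc b - β = (1 + b) - 1 - β := by abel
      _ = (β + c) - 1 - β := by rw [h1]
      _ = c - 1 := by abel
    have hδu : IsUnit (b - β) := by
      rw [hδeq]
      have := hcnil.isUnit_one_sub
      have h2 : c - 1 = -(1 - c) := by abel
      rw [h2]
      exact this.neg
    exact lemB h b β hb hββ hδu

private lemma binom_sq_zero (u b : R) (hco : b * u = u * b) (hb : b * b = 0) :
    ∀ M : ℕ, (u - b) ^ (M + 1) = u ^ (M + 1) - (M + 1) • (u ^ M * b) := by
  intro M
  induction M with
  | zero => simp
  | succ M ih =>
    have h1 : (u - b) ^ (M + 2) = (u - b) ^ (M + 1) * (u - b) := pow_succ _ _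
    rw [h1, ih, sub_mul, mul_sub, mul_sub, smul_mul_assoc, smul_mul_assoc]
    have h2 : u ^ M * b * u = u ^ (M + 1) * b := by
      rw [mul_assoc, hco, ← mul_assoc, ← pow_succ]
    have h3 : u ^ M * b * b = 0 := by rw [mul_assoc, hb, mul_zero]
    rw [h2, h3, smul_zero, sub_zero, ← pow_succ,
      succ_nsmul (u ^ (M + 1) * b) (M + 1), sub_sub,
      add_comm (u ^ (M + 1) * b) ((M + 1) • (u ^ (M + 1) * b))]

/-- nilpotent elements are central -/
private lemma nilp_central [Nontrivial R]
    (h : ∀ a : R, ¬ (a ∈ Set.center R ∧ IsUnit a) →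
      ∃ b c : R, b ^ 2 = 0 ∧ IsNilpotent c ∧ a = b + c)
    (n : R) (hn : IsNilpotent n) : ∀ x : R, x * n = n * x := by
  by_cases hcen : ∀ y : R, y * (1 + n) = (1 + n) * y
  · intro x
    have h1 := hcen x
    rw [mul_add, add_mul, mul_one, one_mul] at h1
    exact add_left_cancel h1
  · exfalso
    have hu : IsUnit (1 + n) := by
      have h1 := (hn.neg).isUnit_one_sub
      rwa [sub_neg_eq_add] at h1
    have hnc : ¬ ((1 + n) ∈ Set.center R ∧ IsUnit (1 + n)) := by
      intro hco
      exact hcen (fun y => ((Set.mem_center_iff.mp hco.1).comm y).symm)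
    obtain ⟨b, c, hb, hcnil, heq⟩ := h (1 + n) hnc
    have hbb : b * b = 0 := by rw [← pow_two]; exact hb
    have hbc := sqzero_central h b hbb
    have hceq : c = (1 + n) - b := by rw [heq]; abel
    obtain ⟨m, hm⟩ := hcnil
    rcases m with _ | M
    · rw [pow_zero] at hm
      exact one_ne_zero hm
    · rw [hceq, binom_sq_zero (1+n) b (hbc (1+n)).symm hbb M] at hm
      have hmm : (1 + n) ^ (M + 1) = (M + 1) • ((1 + n) ^ M * b) :=
        sub_eq_zero.mp hm
      rw [pow_succ, ← mul_smul_comm] at hmm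
      have hcansq : (1 + n) = (M + 1) • b := (hu.pow M).mul_left_cancel hmm
      apply hcen
      intro y
      rw [hcansq, smul_mul_assoc, mul_smul_comm, hbc y]

end Aux

theorem stmt_11 (R : Type*) [Ring R] [Nontrivial R]
    (h : ∀ a : R, ¬ (a ∈ Set.center R ∧ IsUnit a) →
      ∃ b c : R, b ^ 2 = 0 ∧ IsNilpotent c ∧ a = b + c) :
    ∀ a b : R, a * b = b * a := by
  intro p q
  by_cases hc : p ∈ Set.center R ∧ IsUnit p
  · exact (Set.mem_center_iff.mp hc.1).comm q
  · obtain ⟨b, c, hb, hcnil, heq⟩ := h p hc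
    have hbb : b * b = 0 := by rw [← pow_two]; exact hb
    rw [heq, add_mul, mul_add, sqzero_central h b hbb q, nilp_central h c hcnil q]
end

section
/- Let R be a ring and let e ∈ R be an idempotent with e ≠ 1. If e = b + c where b² = 0 and c is nilpotent, then e = 0. -/
theorem stmt_12 (R : Type*) [Ring R] (e : R) (he : e * e = e) (hne : e ≠ 1)
    (b c : R) (hb : b ^ 2 = 0) (hc : IsNilpotent c) (hsum : e = b + c) :
    e = 0 := by
  obtain ⟨n, hcn⟩ := hc
  have hb2 : b * b = 0 := by rw [← pow_two]; exact hb
  have hcb : c = e - b := by rw [hsum]; abel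
  set x : R := e * b * e with hx
  have hxe : x * e = x := by rw [hx, mul_assoc, he]
  have hex : e * x = x := by rw [hx, ← mul_assoc, ← mul_assoc, he]
  -- key recurrence : e c^(k+2) e = e c^(k+1) e - (e c^k e) * x
  have key : ∀ k : ℕ, e * c ^ (k+2) * e = e * c ^ (k+1) * e - (e * c ^ k * e) * x := by
    intro k
    have h1 : e * c ^ (k+1) * b = e * c ^ k * e * b := by
      rw [pow_succ, hcb]
      simp only [mul_sub, sub_mul, mul_assoc, hb2, mul_zero, sub_zero]
    have h2 : e * c ^ (k+2) * e = e * c ^ (k+1) * e - e * c ^ (k+1) * b * e := by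
      rw [show (k+2) = (k+1)+1 from rfl, pow_succ]
      nth_rewrite 2 [hcb]
      simp only [mul_sub, sub_mul, mul_assoc, he]
    rw [h2, h1]
    have hee : e * (e * (b * e)) = e * (b * e) := by rw [← mul_assoc, he]
    have h3 : e * c ^ k * e * b * e = e * c ^ k * e * x := by
      rw [hx]
      simp only [mul_assoc, hee]
    rw [h3]
  -- main induction : e c^k e = e - x * g with e*g = g
  have main : ∀ k : ℕ, ∃ g h : R, e * g = g ∧ e * h = h ∧
      e * c ^ k * e = e - x * g ∧ e * c ^ (k+1) * e = e - x * h := by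
    intro k
    induction k with
    | zero =>
      refine ⟨0, e, mul_zero e, he, ?_, ?_⟩
      · simp [he]
      · rw [pow_one, hcb, mul_sub, sub_mul, he, hxe, he, hx]
    | succ k ih =>
      obtain ⟨g, h, hg, hh, hA, hA1⟩ := ih
      refine ⟨h, h + e - g * x, hh, ?_, hA1, ?_⟩
      · rw [mul_sub, mul_add, hh, he, ← mul_assoc, hg]
      · rw [show k+1+1 = k+2 from rfl, key k, hA, hA1]
        rw [mul_sub, mul_add, hxe, sub_mul, hex, ← mul_assoc x g x]
        abel
  obtain ⟨g, h, hg, hh, hA, _⟩ := main n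
  have hxg : x * g = e := by
    have h0 : e * c ^ n * e = 0 := by rw [hcn, mul_zero, zero_mul]
    rw [h0] at hA
    exact (sub_eq_zero.mp hA.symm).symm
  -- e * (b * g) = e
  have h5 : x * g = e * (b * g) := by rw [hx, mul_assoc, mul_assoc, hg]
  have hebv : e * (b * g) = e := by rw [← h5, hxg]
  -- c * (b * g) = e
  have hca : c * (b * g) = e := by
    rw [hcb, sub_mul, hebv, ← mul_assoc, hb2, zero_mul, sub_zero]
  -- (1-c) * g = b * g
  have huv : (1 - c) * g = b * g := by
    rw [hcb]
    have h' : (1 - (e - b)) * g = g - e * g + b * g := by noncomm_ring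
    rw [h', hg]
    abel
  -- one-step identity, in a convenient form
  have hstep' : ∀ z : R, c * ((1 - c) * (e * (g * z))) = e * z := by
    intro z
    rw [← mul_assoc e g z, hg, ← mul_assoc (1-c) g z, huv, ← mul_assoc c (b*g) z, hca]
  -- iterate
  have hiter : ∀ k : ℕ, e = (c * (1 - c)) ^ k * (e * g ^ k) := by
    intro k
    induction k with
    | zero => simp
    | succ k ih =>
      have h6 : (c * (1-c)) ^ (k+1) * (e * g ^ (k+1)) =
          (c * (1-c)) ^ k * (c * ((1 - c) * (e * (g * g ^ k)))) := by
        rw [pow_succ, pow_succ']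
        simp only [mul_assoc]
      rw [h6, hstep' (g ^ k)]
      exact ih
  have hcu : Commute c (1 - c) := (Commute.one_right c).sub_right (Commute.refl c)
  have h7 : (c * (1 - c)) ^ n = 0 := by rw [hcu.mul_pow, hcn, zero_mul]
  have hfin := hiter n
  rw [h7, zero_mul] at hfin
  exact hfin
end

section
/- Let R be a ring, n ≥ 2, and let A ∈ M_n(R) be a matrix with a_{i+1,i} = 1 for 1 ≤ i ≤ n−1 and a_{ij} = 0 for i > j+1 (lower Hessenberg with unit subdiagonal and zeros below). Then for 1 ≤ k ≤ n, the (k,1)-entry of A^k equals a_{11} + a_{22} + ⋯ + a_{kk}. In particular, the (n,1)-entry of A^n is the trace of A. -/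
theorem stmt_14 (R : Type*) [Ring R] (n : ℕ) (hn : 2 ≤ n)
    (A : Matrix (Fin n) (Fin n) R)
    (hsub : ∀ i j : Fin n, (i : ℕ) = (j : ℕ) + 1 → A i j = 1)
    (hlow : ∀ i j : Fin n, (j : ℕ) + 1 < (i : ℕ) → A i j = 0) :
    ∀ k : Fin n, (A ^ ((k : ℕ) + 1)) k ⟨0, by omega⟩ = ∑ i ∈ Finset.Iic k, A i i := by
  have hz : 0 < n := by omega
  set z : Fin n := ⟨0, hz⟩ with hzdef
  have key : ∀ m : ℕ,
      (∀ i : Fin n, m < (i : ℕ) → (A ^ m) i z = 0) ∧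
      (∀ i : Fin n, (i : ℕ) = m → (A ^ m) i z = 1) ∧
      (∀ i : Fin n, (i : ℕ) + 1 = m → (A ^ m) i z = ∑ j ∈ Finset.Iic i, A j j) := by
    intro m
    induction m with
    | zero =>
      refine ⟨?_, ?_, ?_⟩
      · intro i hi
        have hne : i ≠ z := by
          intro h; rw [h] at hi; simp [hzdef] at hi
        simp [Matrix.one_apply, hne]
      · intro i hi
        have : i = z := Fin.ext hi
        simp [this, Matrix.one_apply]
      · intro i hi; omega
    | succ m ih =>
      obtain ⟨ha, hb, hc⟩ := ih
      have hmul : ∀ i : Fin n, (A ^ (m + 1)) i z = ∑ x, A i x * (A ^ m) x z := by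
        intro i
        rw [pow_succ', Matrix.mul_apply]
      refine ⟨?_, ?_, ?_⟩
      · intro i hi
        rw [hmul]
        apply Finset.sum_eq_zero
        intro x _
        rcases lt_or_ge ((x : ℕ) + 1) (i : ℕ) with h | h
        · rw [hlow i x h, zero_mul]
        · rw [ha x (by omega), mul_zero]
      · intro i hi
        have hm : m < n := by omega
        rw [hmul]
        rw [Finset.sum_eq_single (⟨m, hm⟩ : Fin n)]
        · rw [hsub i ⟨m, hm⟩ (by simpa using hi), hb ⟨m, hm⟩ rfl, one_mul]
        · intro x _ hx
          have hx' : (x : ℕ) ≠ m := by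
            intro h; exact hx (Fin.ext h)
          rcases lt_or_gt_of_ne hx' with h | h
          · rw [hlow i x (by omega), zero_mul]
          · rw [ha x h, mul_zero]
        · intro h; exact absurd (Finset.mem_univ _) h
      · intro i hi
        have him : (i : ℕ) = m := by omega
        rw [hmul]
        rcases Nat.eq_zero_or_pos (i : ℕ) with h0 | h0
        · -- i = 0, m = 0
          have hiz : i = z := Fin.ext h0
          rw [Finset.sum_eq_single i]
          · have : (A ^ m) i z = 1 := hb i him
            rw [this, mul_one]
            have hIic : Finset.Iic i = {i} := by
              ext j
              simp only [Finset.mem_Iic, Finset.mem_singleton, Fin.le_def, Fin.ext_iff]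
              omega
            rw [hIic, Finset.sum_singleton]
          · intro x _ hx
            have hx' : (x : ℕ) ≠ (i : ℕ) := fun h => hx (Fin.ext h)
            rcases lt_or_gt_of_ne hx' with h | h
            · omega
            · rw [ha x (by omega), mul_zero]
          · intro h; exact absurd (Finset.mem_univ _) h
        · -- i ≥ 1
          set jp : Fin n := ⟨(i : ℕ) - 1, by omega⟩ with hjp
          have hjpne : jp ≠ i := by
            intro h
            have := congrArg Fin.val h
            simp [hjp] at this
            omega
          have hsum : ∑ x, A i x * (A ^ m) x z
              = ∑ x ∈ ({jp, i} : Finset (Fin n)), A i x * (A ^ m) x z := by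
            symm
            apply Finset.sum_subset (Finset.subset_univ _)
            intro x _ hx
            simp only [Finset.mem_insert, Finset.mem_singleton] at hx
            push_neg at hx
            obtain ⟨hx1, hx2⟩ := hx
            have hx1' : (x : ℕ) ≠ (i : ℕ) - 1 := fun h => hx1 (Fin.ext h)
            have hx2' : (x : ℕ) ≠ (i : ℕ) := fun h => hx2 (Fin.ext h)
            rcases lt_or_ge ((x : ℕ) + 1) (i : ℕ) with h | h
            · rw [hlow i x h, zero_mul]
            · rw [ha x (by omega), mul_zero]
          rw [hsum, Finset.sum_pair hjpne]
          have h1 : A i jp = 1 := hsub i jp (by simp [hjp]; omega)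
          have h2 : (A ^ m) jp z = ∑ j ∈ Finset.Iic jp, A j j := hc jp (by simp [hjp]; omega)
          have h3 : (A ^ m) i z = 1 := hb i him
          rw [h1, h2, h3, one_mul, mul_one]
          have hIic : Finset.Iic i = insert i (Finset.Iic jp) := by
            ext j
            simp only [Finset.mem_Iic, Finset.mem_insert, Fin.le_def, Fin.ext_iff, hjp]
            omega
          rw [hIic, Finset.sum_insert (by simp [Finset.mem_Iic, Fin.le_def, hjp]; omega)]
          exact add_comm _ _
  intro k
  exact (key ((k : ℕ) + 1)).2.2 k rfl
end

section
/- Let D be a division ring, n ≥ 2, and let A ∈ M_n(D) be a matrix whose only possibly nonzero row is the k-th row. Then A is a sum of two nilpotent matrices if and only if the (k,k)-entry of A is 0. -/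
theorem stmt_15 (D : Type*) [DivisionRing D] (n : ℕ) (hn : 2 ≤ n)
    (k : Fin n) (A : Matrix (Fin n) (Fin n) D)
    (hrow : ∀ i : Fin n, i ≠ k → ∀ j : Fin n, A i j = 0) :
    (∃ X Y : Matrix (Fin n) (Fin n) D,
        IsNilpotent X ∧ IsNilpotent Y ∧ A = X + Y) ↔ A k k = 0 := by
  classical
  constructor
  · rintro ⟨X, Y, hX, hY, hA⟩
    set B : Matrix (Fin n) (Fin n) D := X - A with hBdef
    have hB : IsNilpotent B := by
      have : B = -Y := by rw [hBdef, hA]; abel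
      rw [this]; exact hY.neg
    set e : Fin n → D := Pi.single k 1 with he
    set φ : (Fin n → D) → D := fun v => A.mulVec v k with hφ
    set w : ℕ → Fin n → D := fun m => (X ^ m).mulVec e with hw
    set u : ℕ → Fin n → D := fun N => (B ^ N).mulVec e with hu
    set c : ℕ → D := fun m => φ (w m) with hc
    set d : ℕ → D := fun N => φ (u N) with hd
    -- A.mulVec v is supported at k
    have hAsingle : ∀ v : Fin n → D, A.mulVec v = Pi.single k (φ v) := by
      intro v
      funext i
      by_cases hi : i = k
      · subst hi; simp [hφ]
      · simp [Pi.single_apply, hi, Matrix.mulVec, dotProduct, hrow i hi]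
    -- helper lemmas about mulVec
    have hsum : ∀ (M : Matrix (Fin n) (Fin n) D) (s : Finset ℕ) (f : ℕ → Fin n → D),
        M.mulVec (∑ m ∈ s, f m) = ∑ m ∈ s, M.mulVec (f m) := by
      intro M s f
      induction s using Finset.induction_on with
      | empty => simp [Matrix.mulVec_zero]
      | insert _ _ ha ih => rw [Finset.sum_insert ha, Finset.sum_insert ha, Matrix.mulVec_add, ih]
    have hsmul : ∀ (M : Matrix (Fin n) (Fin n) D) (v : Fin n → D) (t : D),
        M.mulVec (fun i => v i * t) = fun i => M.mulVec v i * t := by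
      intro M v t
      funext i
      simp [Matrix.mulVec, dotProduct, Finset.sum_mul, mul_assoc]
    have hw0 : w 0 = e := by simp [hw, Matrix.one_mulVec]
    have hwsucc : ∀ m, X.mulVec (w m) = w (m + 1) := by
      intro m
      simp [hw, Matrix.mulVec_mulVec, ← pow_succ']
    -- key identity
    have key : ∀ N, u N = w N - ∑ m ∈ Finset.range N, fun i => w (N - 1 - m) i * d m := by
      intro N
      induction N with
      | zero => simp [hu, hw]
      | succ N ih =>
        have h1 : u (N + 1) = X.mulVec (u N) - Pi.single k (d N) := by
          have h0 : u (N + 1) = B.mulVec (u N) := by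
            simp [hu, Matrix.mulVec_mulVec, ← pow_succ']
          rw [h0, hBdef, Matrix.sub_mulVec, hAsingle (u N)]
        rw [h1, ih, Matrix.mulVec_sub, hsum, Finset.sum_range_succ]
        have h2 : Pi.single k (d N) = fun i => w ((N+1) - 1 - N) i * d N := by
          funext i
          simp only [Nat.add_sub_cancel, Nat.sub_self, hw0]
          by_cases hi : i = k
          · subst hi; simp [he]
          · simp [he, Pi.single_apply, hi]
        have h3 : ∀ m ∈ Finset.range N,
            X.mulVec (fun i => w (N - 1 - m) i * d m) = fun i => w ((N+1) - 1 - m) i * d m := by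
          intro m hm
          rw [Finset.mem_range] at hm
          rw [hsmul, hwsucc]
          have : N - 1 - m + 1 = (N + 1) - 1 - m := by omega
          rw [this]
        rw [Finset.sum_congr rfl h3, hwsucc, h2]
        abel
    -- φ is additive and right-linear
    have hφsub : ∀ v v' : Fin n → D, φ (v - v') = φ v - φ v' := by
      intro v v'; simp [hφ, Matrix.mulVec_sub]
    have hφsum : ∀ (s : Finset ℕ) (f : ℕ → Fin n → D),
        φ (∑ m ∈ s, f m) = ∑ m ∈ s, φ (f m) := by
      intro s f; simp [hφ, hsum A s f]
    have hφsmul : ∀ (v : Fin n → D) (t : D), φ (fun i => v i * t) = φ v * t := by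
      intro v t; simp [hφ, hsmul A v t]
    -- the recurrence
    have hrec : ∀ N, d N = c N - ∑ m ∈ Finset.range N, c (N - 1 - m) * d m := by
      intro N
      show φ (u N) = φ (w N) - ∑ m ∈ Finset.range N, φ (w (N - 1 - m)) * φ (u m)
      rw [key N, hφsub, hφsum]
      congr 1
      exact Finset.sum_congr rfl fun m _ => hφsmul _ _
    -- c 0 = A k k
    have hc0 : c 0 = A k k := by
      simp [hc, hw0, hφ, he, Matrix.mulVec, dotProduct, Pi.single_apply]
    -- eventual vanishing
    obtain ⟨nC, hnC0⟩ := hX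
    have hnC : ∀ m, nC ≤ m → c m = 0 := by
      intro m hm
      have hXm : X ^ m = 0 := by
        calc X ^ m = X ^ nC * X ^ (m - nC) := by rw [← pow_add]; congr 1; omega
        _ = 0 := by rw [hnC0, zero_mul]
      simp [hc, hw, hXm, Matrix.zero_mulVec, hφ, Matrix.mulVec_zero]
    obtain ⟨nD, hnD0⟩ := hB
    have hnD : ∀ m, nD ≤ m → d m = 0 := by
      intro m hm
      have hBm : B ^ m = 0 := by
        calc B ^ m = B ^ nD * B ^ (m - nD) := by rw [← pow_add]; congr 1; omega
        _ = 0 := by rw [hnD0, zero_mul]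
      simp [hd, hu, hBm, Matrix.zero_mulVec, hφ, Matrix.mulVec_zero]
    -- a helper: eventually-zero nonzero sequences have a last nonzero index
    have maxlem : ∀ (f : ℕ → D) (N₀ : ℕ), (∀ m, N₀ ≤ m → f m = 0) → (∃ m, f m ≠ 0) →
        ∃ p, f p ≠ 0 ∧ ∀ m, p < m → f m = 0 := by
      intro f N₀ hN hex
      obtain ⟨m1, hm1⟩ := hex
      have hSne : ((Finset.range N₀).filter (fun m => f m ≠ 0)).Nonempty := by
        refine ⟨m1, ?_⟩
        rw [Finset.mem_filter, Finset.mem_range]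
        refine ⟨?_, hm1⟩
        by_contra hcon
        exact hm1 (hN m1 (by omega))
      refine ⟨((Finset.range N₀).filter (fun m => f m ≠ 0)).max' hSne, ?_, ?_⟩
      · have hmem := Finset.max'_mem _ hSne
        rw [Finset.mem_filter] at hmem
        exact hmem.2
      · intro m hm
        by_contra hfm
        have hmm : m ∈ (Finset.range N₀).filter (fun m => f m ≠ 0) := by
          rw [Finset.mem_filter, Finset.mem_range]
          refine ⟨?_, hfm⟩
          by_contra hcon
          exact hfm (hN m (by omega))
        have := Finset.le_max' _ m hmm
        omega
    -- final argument
    by_contra hne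
    have hc0ne : c 0 ≠ 0 := by rwa [hc0]
    by_cases hdall : ∀ m, d m = 0
    · have := hrec 0
      simp [hdall 0] at this
      exact hc0ne this.symm
    · push_neg at hdall
      obtain ⟨p, hcp, hpmax⟩ := maxlem c nC hnC ⟨0, hc0ne⟩
      obtain ⟨q, hdq, hqmax⟩ := maxlem d nD hnD hdall
      have h1 : d (p + q + 1) = 0 := hqmax _ (by omega)
      have h2 : c (p + q + 1) = 0 := hpmax _ (by omega)
      have h3 : ∑ m ∈ Finset.range (p + q + 1), c ((p + q + 1) - 1 - m) * d m = c p * d q := by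
        rw [Finset.sum_eq_single q]
        · congr 2
          omega
        · intro b hb hbq
          rw [Finset.mem_range] at hb
          rcases lt_or_gt_of_ne hbq with hlt | hgt
          · rw [hpmax ((p + q + 1) - 1 - b) (by omega), zero_mul]
          · rw [hqmax b hgt, mul_zero]
        · intro hq'
          exact absurd (Finset.mem_range.mpr (by omega)) hq'
      have hfin := hrec (p + q + 1)
      rw [h1, h2, h3, zero_sub] at hfin
      exact mul_ne_zero hcp hdq (neg_eq_zero.mp hfin.symm)
  · intro h
    refine ⟨A, 0, ⟨2, ?_⟩, ⟨1, pow_one 0⟩, (add_zero A).symm⟩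
    rw [pow_two]
    ext i j
    rw [Matrix.mul_apply, Matrix.zero_apply]
    by_cases hi : i = k
    · subst hi
      apply Finset.sum_eq_zero
      intro l _
      by_cases hl : l = i
      · subst hl; rw [h, zero_mul]
      · rw [hrow l hl j, mul_zero]
    · apply Finset.sum_eq_zero
      intro l _
      rw [hrow i hi l, zero_mul]
end

section
/- For a division ring D and n ≥ 1, the matrix ring M_n(D) has the 2-nil-sum property if and only if n = 1 and D is commutative (i.e., D is a field). -/
open Module Submodule

private lemma mapQ_nilpotent {D V : Type*} [DivisionRing D] [AddCommGroup V] [Module D V]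
    (L : Submodule D V) (f : Module.End D V) (h : L ≤ L.comap f) (hf : IsNilpotent f) :
    IsNilpotent (Submodule.mapQ L L f h) := by
  obtain ⟨m, hm⟩ := hf
  refine ⟨m, ?_⟩
  have key : ∀ (j : ℕ) (x : V),
      ((Submodule.mapQ L L f h) ^ j) (L.mkQ x) = L.mkQ ((f ^ j) x) := by
    intro j
    induction j with
    | zero => intro x; simp
    | succ j ih =>
      intro x
      rw [pow_succ', pow_succ', Module.End.mul_apply, Module.End.mul_apply, ih]
      simp [Submodule.mapQ_apply]
  refine LinearMap.ext fun z => ?_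
  obtain ⟨x, rfl⟩ := L.mkQ_surjective z
  rw [LinearMap.zero_apply, key m x, hm]
  simp

private lemma restrict_nilpotent {D V : Type*} [DivisionRing D] [AddCommGroup V] [Module D V]
    (p : Submodule D V) (f : Module.End D V) (hf : ∀ x ∈ p, f x ∈ p) (h : IsNilpotent f) :
    IsNilpotent (f.restrict hf) := by
  obtain ⟨m, hm⟩ := h
  refine ⟨m, ?_⟩
  have key : ∀ (j : ℕ) (x : p), (((f.restrict hf) ^ j) x : V) = (f ^ j) (x : V) := by
    intro j
    induction j with
    | zero => intro x; simp
    | succ j ih =>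
      intro x
      rw [pow_succ', pow_succ', Module.End.mul_apply, Module.End.mul_apply,
        LinearMap.restrict_apply]
      show f ((((f.restrict hf) ^ j) x : p) : V) = f ((f ^ j) (x : V))
      rw [ih]
  refine LinearMap.ext fun x => ?_
  apply Subtype.ext
  rw [key m x, hm]
  simp

/-- A rank-one idempotent (given by `u`, `φ` with `φ u = 1`) on a finite-dimensional
vector space over a division ring is never the sum of two nilpotent endomorphisms. -/
theorem key_lemma.{v} (D : Type*) [DivisionRing D] :
    ∀ (k : ℕ) (V : Type v) (_ : AddCommGroup V), ∀ (_ : Module D V) (_ : FiniteDimensional D V),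
      Module.finrank D V = k →
      ∀ (X Y : Module.End D V) (u : V) (φ : V →ₗ[D] D),
        φ u = 1 → IsNilpotent X → IsNilpotent Y →
        (∀ v, X v + Y v = φ v • u) → False := by
  intro k
  induction k using Nat.strong_induction_on with
  | _ k IH =>
    intro V _ _ _ hrk X Y u φ hφu hX hY heq
    have hu0 : u ≠ 0 := by
      intro h; rw [h, map_zero] at hφu; exact zero_ne_one hφu
    obtain ⟨m, hm⟩ := hY
    obtain ⟨w, hw0, hwY⟩ : ∃ w, w ≠ 0 ∧ Y w = 0 := by
      by_contra hcon
      push_neg at hcon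
      have hinj : Function.Injective Y := by
        rw [← LinearMap.ker_eq_bot, Submodule.eq_bot_iff]
        intro x hx
        by_contra hx0
        exact hcon x hx0 hx
      have h2 : Function.Injective ⇑(Y ^ m) := by
        rw [Module.End.coe_pow]; exact hinj.iterate m
      have hYmu : (Y ^ m) u = 0 := by rw [hm]; rfl
      have hu : u = 0 := h2 (by rw [hYmu, map_zero])
      exact hu0 hu
    by_cases hcase : ∃ v, v ≠ 0 ∧ Y v = 0 ∧ φ v = 0
    · -- Case A : quotient by span {v}
      obtain ⟨v, hv0, hvY, hvφ⟩ := hcase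
      have hvX : X v = 0 := by
        have := heq v
        rw [hvY, hvφ, zero_smul, add_zero] at this
        exact this
      set L : Submodule D V := Submodule.span D {v} with hL
      have hvL : v ∈ L := Submodule.mem_span_singleton_self v
      have hLX : L ≤ LinearMap.ker X := by
        rw [Submodule.span_le]; intro x hx; rw [Set.mem_singleton_iff] at hx
        subst hx; exact hvX
      have hLY : L ≤ LinearMap.ker Y := by
        rw [Submodule.span_le]; intro x hx; rw [Set.mem_singleton_iff] at hx
        subst hx; exact hvY
      have hLφ : L ≤ LinearMap.ker φ := by
        rw [Submodule.span_le]; intro x hx; rw [Set.mem_singleton_iff] at hx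
        subst hx; exact hvφ
      have hcX : L ≤ L.comap X := fun x hx => by
        have hx0 : X x = 0 := hLX hx
        simp [Submodule.mem_comap, hx0]
      have hcY : L ≤ L.comap Y := fun x hx => by
        have hx0 : Y x = 0 := hLY hx
        simp [Submodule.mem_comap, hx0]
      have hlt : finrank D (V ⧸ L) < k := by
        have h1 : finrank D (V ⧸ L) + finrank D L = k := by
          rw [Submodule.finrank_quotient_add_finrank L, hrk]
        have h2 : 0 < finrank D L := by
          rw [finrank_pos_iff]
          exact nontrivial_of_ne (⟨v, hvL⟩ : L) 0 (by simp [Subtype.ext_iff, hv0])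
        omega
      exact IH _ hlt (V ⧸ L) inferInstance inferInstance inferInstance rfl
        (Submodule.mapQ L L X hcX) (Submodule.mapQ L L Y hcY)
        (L.mkQ u) (L.liftQ φ hLφ)
        (by simpa using hφu)
        (mapQ_nilpotent L X hcX hX) (mapQ_nilpotent L Y hcY ⟨m, hm⟩)
        (by
          intro z
          obtain ⟨x, rfl⟩ := L.mkQ_surjective z
          simp only [Submodule.mkQ_apply, Submodule.mapQ_apply, Submodule.liftQ_apply]
          rw [← Submodule.Quotient.mk_add, heq x, Submodule.Quotient.mk_smul])
    · -- Case B : restrict to range X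
      push_neg at hcase
      have hφw : φ w ≠ 0 := hcase w hw0 hwY
      set w' := (φ w)⁻¹ • w with hw'
      have hYw' : Y w' = 0 := by rw [hw', map_smul, hwY, smul_zero]
      have hφw' : φ w' = 1 := by rw [hw', map_smul, smul_eq_mul, inv_mul_cancel₀ hφw]
      have hXw' : X w' = u := by
        have := heq w'
        rw [hYw', add_zero, hφw', one_smul] at this
        exact this
      have hu_mem : u ∈ LinearMap.range X := ⟨w', hXw'⟩
      set W : Submodule D V := LinearMap.range X with hW
      have hWtop : W ≠ ⊤ := by
        intro htop
        obtain ⟨m', hm'⟩ := hX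
        have hs : Function.Surjective X := LinearMap.range_eq_top.mp htop
        have hs2 : Function.Surjective ⇑(X ^ m') := by
          rw [Module.End.coe_pow]; exact hs.iterate m'
        obtain ⟨z, hz⟩ := hs2 u
        rw [hm'] at hz
        exact hu0 (by simpa using hz.symm)
      have hlt : finrank D W < k := by
        rw [← hrk]
        exact Submodule.finrank_lt hWtop
      have hXW : ∀ x ∈ W, X x ∈ W := fun x _ => ⟨x, rfl⟩
      have hYW : ∀ x ∈ W, Y x ∈ W := by
        intro x hx
        have hYx : Y x = φ x • u - X x := by
          rw [eq_sub_iff_add_eq, add_comm]; exact heq x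
        rw [hYx]
        exact sub_mem (Submodule.smul_mem W _ hu_mem) ⟨x, rfl⟩
      exact IH _ hlt W inferInstance inferInstance inferInstance rfl
        (X.restrict hXW) (Y.restrict hYW)
        ⟨u, hu_mem⟩ (φ.comp W.subtype)
        (by simpa using hφu)
        (restrict_nilpotent W X hXW hX) (restrict_nilpotent W Y hYW ⟨m, hm⟩)
        (by
          intro x
          apply Subtype.ext
          push_cast
          simp only [LinearMap.restrict_coe_apply, LinearMap.coe_comp, Function.comp_apply,
            coe_subtype, SetLike.val_smul, AddSubmonoid.coe_add, coe_toAddSubmonoid]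
          exact heq (x : V))

private def rmul {D : Type*} [DivisionRing D] {n : ℕ} (M : Matrix (Fin n) (Fin n) D) :
    Module.End D (Fin n → D) where
  toFun v := Matrix.vecMul v M
  map_add' x y := Matrix.add_vecMul M x y
  map_smul' c v := Matrix.smul_vecMul c v M

private lemma rmul_apply {D : Type*} [DivisionRing D] {n : ℕ} (M : Matrix (Fin n) (Fin n) D)
    (v : Fin n → D) : rmul M v = Matrix.vecMul v M := rfl

private lemma rmul_pow {D : Type*} [DivisionRing D] {n : ℕ} (M : Matrix (Fin n) (Fin n) D)
    (m : ℕ) (v : Fin n → D) : ((rmul M) ^ m) v = Matrix.vecMul v (M ^ m) := by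
  induction m with
  | zero => simp [Matrix.vecMul_one]
  | succ m ih =>
    rw [pow_succ', Module.End.mul_apply, ih, rmul_apply, Matrix.vecMul_vecMul, ← pow_succ]

private lemma rmul_nilpotent {D : Type*} [DivisionRing D] {n : ℕ}
    {M : Matrix (Fin n) (Fin n) D} (h : IsNilpotent M) : IsNilpotent (rmul M) := by
  obtain ⟨m, hm⟩ := h
  refine ⟨m, LinearMap.ext fun v => ?_⟩
  rw [rmul_pow, hm]
  simp [Matrix.vecMul]

private lemma pow_one_by_one {D : Type*} [DivisionRing D] (M : Matrix (Fin 1) (Fin 1) D)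
    (m : ℕ) : (M ^ m) 0 0 = (M 0 0) ^ m := by
  induction m with
  | zero => simp [Matrix.one_apply]
  | succ m ih => rw [pow_succ, pow_succ, Matrix.mul_apply, Fin.sum_univ_one, ih]

theorem stmt_18 (D : Type*) [DivisionRing D] (n : ℕ) (hn : 1 ≤ n) :
    (∀ A : Matrix (Fin n) (Fin n) D,
        ¬ (A ∈ Set.center (Matrix (Fin n) (Fin n) D) ∧ IsUnit A) →
        ∃ X Y : Matrix (Fin n) (Fin n) D,
          IsNilpotent X ∧ IsNilpotent Y ∧ A = X + Y) ↔
      n = 1 ∧ ∀ a b : D, a * b = b * a := by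
  constructor
  · intro H
    have hn1 : n = 1 := by
      by_contra hne
      obtain ⟨n', rfl⟩ : ∃ n', n = n' + 2 := ⟨n - 2, by omega⟩
      set i0 : Fin (n' + 2) := 0 with hi0
      set i1 : Fin (n' + 2) := 1 with hi1
      have h10 : i1 ≠ i0 := by simp [hi0, hi1, Fin.ext_iff]
      set A : Matrix (Fin (n' + 2)) (Fin (n' + 2)) D :=
        Matrix.of (fun i j => if i = i0 ∧ j = i0 then (1 : D) else 0) with hA
      have hnotunit : ¬ IsUnit A := by
        intro hu
        obtain ⟨B, hB⟩ := hu.exists_right_inv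
        have h1 : (A * B) i1 i1 = 1 := by rw [hB, Matrix.one_apply_eq]
        rw [Matrix.mul_apply] at h1
        have h0 : ∀ j, A i1 j * B j i1 = 0 := by
          intro j
          simp [hA, h10]
        rw [Finset.sum_congr rfl (fun j _ => h0 j), Finset.sum_const_zero] at h1
        exact zero_ne_one h1
      obtain ⟨X, Y, hXn, hYn, hsum⟩ := H A (fun h => hnotunit h.2)
      refine key_lemma D (Module.finrank D (Fin (n' + 2) → D)) (Fin (n' + 2) → D)
        inferInstance inferInstance inferInstance rfl (rmul X) (rmul Y)
        (Pi.single i0 1) (LinearMap.proj i0) (by simp [LinearMap.proj_apply, Pi.single_eq_same]) (rmul_nilpotent hXn)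
        (rmul_nilpotent hYn) ?_
      intro v
      have : rmul X v + rmul Y v = Matrix.vecMul v A := by
        rw [rmul_apply, rmul_apply, ← Matrix.vecMul_add, ← hsum]
      rw [this]
      funext i
      by_cases hi : i = i0
      · subst hi
        simp [Matrix.vecMul, dotProduct, hA, Pi.single_apply, mul_ite,
          Finset.sum_ite_eq']
      · simp [Matrix.vecMul, dotProduct, hA, Pi.single_apply, hi, mul_ite]
    refine ⟨hn1, ?_⟩
    subst hn1
    intro a b
    by_contra hab
    set A : Matrix (Fin 1) (Fin 1) D := Matrix.of (fun _ _ => a) with hA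
    have hnc : ¬ (A ∈ Set.center (Matrix (Fin 1) (Fin 1) D) ∧ IsUnit A) := by
      rintro ⟨hc, -⟩
      have := (Semigroup.mem_center_iff.mp hc) (Matrix.of (fun _ _ => b))
      have h2 := congrFun (congrFun this 0) 0
      rw [Matrix.mul_apply, Matrix.mul_apply, Fin.sum_univ_one] at h2
      exact hab (by simpa [hA] using h2.symm)
    obtain ⟨X, Y, hXn, hYn, hsum⟩ := H A hnc
    have hx : X 0 0 = 0 := by
      obtain ⟨m, hm⟩ := hXn
      refine IsNilpotent.eq_zero ⟨m, ?_⟩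
      rw [← pow_one_by_one, hm, Matrix.zero_apply]
    have hy : Y 0 0 = 0 := by
      obtain ⟨m, hm⟩ := hYn
      refine IsNilpotent.eq_zero ⟨m, ?_⟩
      rw [← pow_one_by_one, hm, Matrix.zero_apply]
    have ha : a = 0 := by
      have := congrFun (congrFun hsum 0) 0
      simpa [hA, hx, hy] using this
    subst ha
    exact hab (by simp)
  · rintro ⟨hn1, hcomm⟩
    subst hn1
    intro A hA
    by_cases h0 : A = 0
    · exact ⟨0, 0, ⟨1, by simp⟩, ⟨1, by simp⟩, by simp [h0]⟩
    exfalso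
    apply hA
    have ha : A 0 0 ≠ 0 := by
      intro h
      apply h0
      ext i j
      have hi : i = 0 := Subsingleton.elim _ _
      have hj : j = 0 := Subsingleton.elim _ _
      rw [hi, hj, h, Matrix.zero_apply]
    constructor
    · rw [Semigroup.mem_center_iff]
      intro B
      ext i j
      have hi : i = 0 := Subsingleton.elim _ _
      have hj : j = 0 := Subsingleton.elim _ _
      rw [hi, hj]
      simp only [Matrix.mul_apply, Fin.sum_univ_one]
      exact hcomm _ _
    · rw [isUnit_iff_exists]
      refine ⟨Matrix.of (fun _ _ => (A 0 0)⁻¹), ?_, ?_⟩ <;>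
      · ext i j
        have hi : i = 0 := Subsingleton.elim _ _
        have hj : j = 0 := Subsingleton.elim _ _
        subst hi; subst hj
        simp [Matrix.mul_apply, Fin.sum_univ_one, Matrix.one_apply,
          mul_inv_cancel₀ ha, inv_mul_cancel₀ ha]
end
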